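/- arXiv:math/0701354 — 2 statements merged into one kernel-verified Lean document; each statement's English description precedes it below -/
import Mathlib

section
/- If an unconditional seminormalized basic sequence has Property P1, then it has Property P2. -/
open Filter

noncomputable section

/-- `x` is a basic sequence: nonzero terms and uniformly bounded initial-segment projections. -/
def IsBasicSeq {X : Type*} [NormedAddCommGroup X] [NormedSpace ℝ X] (x : ℕ → X) : Prop :=
  (∀ n, x n ≠ 0) ∧
  ∃ C : ℝ, 1 ≤ C ∧ ∀ (a : ℕ → ℝ) (m n : ℕ), m ≤ n →
    ‖∑ i ∈ Finset.range m, a i • x i‖ ≤ C * ‖∑ i ∈ Finset.range n, a i • x i‖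

/-- `x` is seminormalized: `0 < inf ‖x n‖ ≤ sup ‖x n‖ < ∞`. -/
def IsSeminormalized {X : Type*} [NormedAddCommGroup X] (x : ℕ → X) : Prop :=
  ∃ c C : ℝ, 0 < c ∧ ∀ n, c ≤ ‖x n‖ ∧ ‖x n‖ ≤ C

/-- `xt` is a spreading model of the sequence `x`. -/
def IsSpreadingModelOf {X W : Type*} [NormedAddCommGroup X] [NormedSpace ℝ X]
    [NormedAddCommGroup W] [NormedSpace ℝ W] (xt : ℕ → W) (x : ℕ → X) : Prop :=
  ∃ ε : ℕ → ℝ, (∀ n, 0 < ε n) ∧ Antitone ε ∧ Tendsto ε atTop (nhds 0) ∧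
    ∀ (n : ℕ) (a : ℕ → ℝ), (∀ i < n, |a i| ≤ 1) →
      ∀ k : ℕ → ℕ, StrictMono k → n ≤ k 0 →
        |‖∑ i ∈ Finset.range n, a i • x (k i)‖ - ‖∑ i ∈ Finset.range n, a i • xt i‖| < ε n

/-- `z` dominates `x` on small coefficients (`x << z`): `Δ_{(z),(x)}(ε) → 0` as `ε ↘ 0`. -/
def SCDominates {Z W : Type*} [NormedAddCommGroup Z] [NormedSpace ℝ Z]
    [NormedAddCommGroup W] [NormedSpace ℝ W] (z : ℕ → Z) (x : ℕ → W) : Prop :=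
  ∀ δ : ℝ, 0 < δ → ∃ ε : ℝ, 0 < ε ∧ ∀ (N : ℕ) (a : ℕ → ℝ),
    (∀ i, |a i| ≤ ε) → ‖∑ i ∈ Finset.range N, a i • z i‖ ≤ 1 →
    ‖∑ i ∈ Finset.range N, a i • x i‖ ≤ δ

/-- `x` dominates `y` (with some constant). -/
def Dominates {X Y : Type*} [NormedAddCommGroup X] [NormedSpace ℝ X]
    [NormedAddCommGroup Y] [NormedSpace ℝ Y] (x : ℕ → X) (y : ℕ → Y) : Prop :=
  ∃ C : ℝ, 0 < C ∧ ∀ (N : ℕ) (a : ℕ → ℝ),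
    ‖∑ i ∈ Finset.range N, a i • y i‖ ≤ C * ‖∑ i ∈ Finset.range N, a i • x i‖

/-- Property P1: `liminf_n inf_{|A| = n} ‖∑_{i ∈ A} z i‖ = ∞`. -/
def PropertyP1 {Z : Type*} [NormedAddCommGroup Z] (z : ℕ → Z) : Prop :=
  ∀ R : ℝ, ∃ N : ℕ, ∀ A : Finset ℕ, N ≤ A.card → R ≤ ‖∑ i ∈ A, z i‖

/-- Property P2. -/
def PropertyP2 {Z : Type*} [NormedAddCommGroup Z] [NormedSpace ℝ Z] (z : ℕ → Z) : Prop :=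
  ∀ ρ : ℝ, 0 < ρ → ∃ M : ℕ, ∀ (N : ℕ) (a : ℕ → ℝ),
    ‖∑ i ∈ Finset.range N, a i • z i‖ = 1 →
    ((Finset.range N).filter fun i => ρ ≤ |a i|).card ≤ M

/-- `z` is an unconditional (basic) sequence. -/
def IsUnconditionalSeq {Z : Type*} [NormedAddCommGroup Z] [NormedSpace ℝ Z] (z : ℕ → Z) : Prop :=
  ∃ C : ℝ, 1 ≤ C ∧ ∀ (a : ℕ → ℝ) (s A : Finset ℕ), A ⊆ s →
    ‖∑ i ∈ A, a i • z i‖ ≤ C * ‖∑ i ∈ s, a i • z i‖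

/-- There is a closed subspace `Y` of `X` with a basis and an operator `T : Y → X` which is
not a compact perturbation of a multiple of the inclusion map. -/
def ExistsNontrivialOperator (X : Type*) [NormedAddCommGroup X] [NormedSpace ℝ X] : Prop :=
  ∃ Y : Submodule ℝ X, IsClosed (Y : Set X) ∧
    (∃ b : ℕ → X, IsBasicSeq b ∧ Y = (Submodule.span ℝ (Set.range b)).topologicalClosure) ∧
    ∃ T : Y →L[ℝ] X,
      ¬ ∃ (c : ℝ) (K : Y →L[ℝ] X), IsCompactOperator K ∧ T = c • Y.subtypeL + K

/-- Convexity bound: if all `w + ∑_{B} v i` (for `B ⊆ A`) have norm at most `M`, then so does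
`w + ∑_{A} t i • v i` whenever all `t i ∈ [0,1]`. -/
lemma convex_sum_bound {Z : Type*} [NormedAddCommGroup Z] [NormedSpace ℝ Z]
    (v : ℕ → Z) (t : ℕ → ℝ) (M : ℝ) :
    ∀ (A : Finset ℕ) (w : Z), (∀ i ∈ A, 0 ≤ t i ∧ t i ≤ 1) →
      (∀ B ⊆ A, ‖w + ∑ i ∈ B, v i‖ ≤ M) → ‖w + ∑ i ∈ A, t i • v i‖ ≤ M := by
  intro A
  induction A using Finset.induction_on with
  | empty =>
      intro w _ hB
      simpa using hB ∅ (by simp)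
  | @insert j A hjA ih =>
      intro w ht hB
      obtain ⟨htj0, htj1⟩ := ht j (Finset.mem_insert_self j A)
      have h1 : ‖(w + v j) + ∑ i ∈ A, t i • v i‖ ≤ M := by
        refine ih (w + v j) (fun i hi => ht i (Finset.mem_insert_of_mem hi)) ?_
        intro B hBA
        have hjB : j ∉ B := fun hj => hjA (hBA hj)
        have : (w + v j) + ∑ i ∈ B, v i = w + ∑ i ∈ insert j B, v i := by
          rw [Finset.sum_insert hjB]; abel
        rw [this]
        exact hB (insert j B) (Finset.insert_subset_insert j hBA)
      have h2 : ‖w + ∑ i ∈ A, t i • v i‖ ≤ M := by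
        refine ih w (fun i hi => ht i (Finset.mem_insert_of_mem hi)) ?_
        intro B hBA
        exact hB B (hBA.trans (Finset.subset_insert j A))
      have key : w + ∑ i ∈ insert j A, t i • v i
          = t j • ((w + v j) + ∑ i ∈ A, t i • v i) + (1 - t j) • (w + ∑ i ∈ A, t i • v i) := by
        rw [Finset.sum_insert hjA]
        module
      calc ‖w + ∑ i ∈ insert j A, t i • v i‖
          ≤ t j * ‖(w + v j) + ∑ i ∈ A, t i • v i‖
            + (1 - t j) * ‖w + ∑ i ∈ A, t i • v i‖ := by
            rw [key]
            refine (norm_add_le _ _).trans ?_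
            rw [norm_smul, norm_smul, Real.norm_of_nonneg htj0,
              Real.norm_of_nonneg (by linarith)]
        _ ≤ t j * M + (1 - t j) * M := by
            have e1 := mul_le_mul_of_nonneg_left h1 htj0
            have e2 := mul_le_mul_of_nonneg_left h2 (by linarith : (0:ℝ) ≤ 1 - t j)
            linarith
        _ = M := by ring

/-- Proposition 3.7 (c). -/
theorem statement_17
    {Z : Type*} [NormedAddCommGroup Z] [NormedSpace ℝ Z] [CompleteSpace Z]
    (z : ℕ → Z) (hzsn : IsSeminormalized z) (hzb : IsBasicSeq z)
    (hu : IsUnconditionalSeq z)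
    (h : PropertyP1 z) : PropertyP2 z := by
  obtain ⟨C, hC1, hC⟩ := hu
  intro ρ hρ
  obtain ⟨M, hM⟩ := h (2 * C / ρ + 1)
  refine ⟨M, fun n a ha => ?_⟩
  set A := (Finset.range n).filter fun i => ρ ≤ |a i| with hA
  by_contra hcard
  push_neg at hcard
  have hbig := hM A hcard.le
  -- bound ‖∑ i ∈ A, z i‖ by 2C/ρ using the convexity lemma
  have hAsub : A ⊆ Finset.range n := Finset.filter_subset _ _
  have hzA : ‖(0 : Z) + ∑ i ∈ A, (ρ / |a i|) • ((|a i| / ρ) • z i)‖ ≤ 2 * C / ρ := by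
    refine convex_sum_bound (fun i => (|a i| / ρ) • z i) (fun i => ρ / |a i|) _ A 0 ?_ ?_
    · intro i hi
      have hai : ρ ≤ |a i| := (Finset.mem_filter.mp hi).2
      constructor
      · positivity
      · rw [div_le_one (lt_of_lt_of_le hρ hai)]; exact hai
    · intro B hBA
      rw [zero_add]
      have hsum : ∑ i ∈ B, (|a i| / ρ) • z i = (1 / ρ) • ∑ i ∈ B, |a i| • z i := by
        rw [Finset.smul_sum]
        refine Finset.sum_congr rfl fun i _ => ?_
        rw [smul_smul]
        ring_nf
      set P := B.filter fun i => 0 ≤ a i with hP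
      set Q := B.filter fun i => ¬ 0 ≤ a i with hQ
      have hsplit : ∑ i ∈ B, |a i| • z i
          = (∑ i ∈ P, a i • z i) - ∑ i ∈ Q, a i • z i := by
        rw [← Finset.sum_filter_add_sum_filter_not B (fun i => 0 ≤ a i)]
        rw [sub_eq_add_neg, ← Finset.sum_neg_distrib]
        congr 1
        · exact Finset.sum_congr rfl fun i hi =>
            by rw [abs_of_nonneg (Finset.mem_filter.mp hi).2]
        · exact Finset.sum_congr rfl fun i hi => by
            rw [abs_of_neg (lt_of_not_ge (Finset.mem_filter.mp hi).2), neg_smul]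
      have hPn : ‖∑ i ∈ P, a i • z i‖ ≤ C := by
        have := hC a (Finset.range n) P
          ((Finset.filter_subset _ _).trans (hBA.trans hAsub))
        rwa [ha, mul_one] at this
      have hQn : ‖∑ i ∈ Q, a i • z i‖ ≤ C := by
        have := hC a (Finset.range n) Q
          ((Finset.filter_subset _ _).trans (hBA.trans hAsub))
        rwa [ha, mul_one] at this
      rw [hsum, hsplit, norm_smul, Real.norm_of_nonneg (by positivity : (0:ℝ) ≤ 1/ρ)]
      have : ‖(∑ i ∈ P, a i • z i) - ∑ i ∈ Q, a i • z i‖ ≤ 2 * C := by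
        refine (norm_sub_le _ _).trans ?_
        linarith
      calc 1 / ρ * ‖(∑ i ∈ P, a i • z i) - ∑ i ∈ Q, a i • z i‖
          ≤ 1 / ρ * (2 * C) :=
            mul_le_mul_of_nonneg_left this (by positivity)
        _ = 2 * C / ρ := by ring
  have heq : ∑ i ∈ A, (ρ / |a i|) • ((|a i| / ρ) • z i) = ∑ i ∈ A, z i := by
    refine Finset.sum_congr rfl fun i hi => ?_
    have hai : ρ ≤ |a i| := (Finset.mem_filter.mp hi).2
    have hai0 : |a i| ≠ 0 := (lt_of_lt_of_le hρ hai).ne'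
    rw [smul_smul]
    have : ρ / |a i| * (|a i| / ρ) = 1 := by field_simp
    rw [this, one_smul]
  rw [zero_add, heq] at hzA
  linarith

end
end

section
/- Let (z_i) be a Schreier unconditional seminormalized basic sequence in a Banach space. If (z_i) has Property P1, then there exists a subsequence (z_{n_i}) of (z_i) which has Property P2. -/
open Filter

noncomputable section

lemma multiplier_bound' {X : Type*} [NormedAddCommGroup X] [NormedSpace ℝ X]
    (v : ℕ → X) (M : ℝ) :
    ∀ S : Finset ℕ, (∀ T ⊆ S, ‖∑ j ∈ T, v j‖ ≤ M) →
      ∀ lam : ℕ → ℝ, (∀ j ∈ S, 0 ≤ lam j ∧ lam j ≤ 1) →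
        ‖∑ j ∈ S, lam j • v j‖ ≤ M := by
  intro S
  induction S using Finset.strongInductionOn with
  | _ S ih =>
    intro hT lam hlam
    rcases S.eq_empty_or_nonempty with rfl | hS
    · simpa using hT ∅ (by simp)
    · set μ := S.inf' hS lam with hμdef
      obtain ⟨j₀, hj₀S, hj₀⟩ := S.exists_mem_eq_inf' hS lam
      have hμ0 : 0 ≤ μ := by rw [hμdef, hj₀]; exact (hlam j₀ hj₀S).1
      have hμ1 : μ ≤ 1 := by rw [hμdef, hj₀]; exact (hlam j₀ hj₀S).2
      have hμle : ∀ j ∈ S, μ ≤ lam j := fun j hj => Finset.inf'_le _ hj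
      by_cases hμeq : μ = 1
      · have heq : ∀ j ∈ S, lam j • v j = v j := by
          intro j hj
          have h1 : lam j = 1 := le_antisymm (hlam j hj).2 (hμeq ▸ hμle j hj)
          rw [h1, one_smul]
        rw [Finset.sum_congr rfl heq]
        exact hT S (subset_refl S)
      · have hμlt : μ < 1 := lt_of_le_of_ne hμ1 hμeq
        have h1μ : (0:ℝ) < 1 - μ := by linarith
        have hsub : ∑ j ∈ S, lam j • v j - μ • ∑ j ∈ S, v j
            = ∑ j ∈ S.erase j₀, (lam j - μ) • v j := by
          rw [Finset.smul_sum, ← Finset.sum_sub_distrib]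
          rw [Finset.sum_congr rfl (fun j _ => (sub_smul (lam j) μ (v j)).symm)]
          exact (Finset.sum_erase _ (by show (lam j₀ - μ) • v j₀ = 0; rw [hμdef, hj₀]; simp)).symm
        have hfac : ∑ j ∈ S.erase j₀, (lam j - μ) • v j
            = (1 - μ) • ∑ j ∈ S.erase j₀, ((lam j - μ)/(1-μ)) • v j := by
          rw [Finset.smul_sum]
          refine Finset.sum_congr rfl (fun j _ => ?_)
          rw [smul_smul, mul_div_cancel₀]
          exact ne_of_gt h1μ
        have hih : ‖∑ j ∈ S.erase j₀, ((lam j - μ)/(1-μ)) • v j‖ ≤ M := by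
          refine ih (S.erase j₀) (Finset.erase_ssubset hj₀S)
            (fun T hTs => hT T (hTs.trans (Finset.erase_subset _ _))) _ ?_
          intro j hj
          have hjS := Finset.mem_of_mem_erase hj
          refine ⟨div_nonneg (by linarith [hμle j hjS]) h1μ.le, ?_⟩
          rw [div_le_one h1μ]
          linarith [(hlam j hjS).2]
        have hkey : ∑ j ∈ S, lam j • v j = μ • ∑ j ∈ S, v j
            + (1 - μ) • ∑ j ∈ S.erase j₀, ((lam j - μ)/(1-μ)) • v j := by
          rw [← hfac, ← hsub]; abel
        rw [hkey]
        calc ‖μ • ∑ j ∈ S, v j + (1 - μ) • ∑ j ∈ S.erase j₀, ((lam j - μ)/(1-μ)) • v j‖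
            ≤ ‖μ • ∑ j ∈ S, v j‖ + ‖(1 - μ) • ∑ j ∈ S.erase j₀, ((lam j - μ)/(1-μ)) • v j‖ :=
              norm_add_le _ _
          _ = μ * ‖∑ j ∈ S, v j‖ + (1 - μ) * ‖∑ j ∈ S.erase j₀, ((lam j - μ)/(1-μ)) • v j‖ := by
              rw [norm_smul, norm_smul, Real.norm_of_nonneg hμ0, Real.norm_of_nonneg h1μ.le]
          _ ≤ μ * M + (1 - μ) * M := by
              gcongr
              exact hT S (subset_refl S)
          _ = M := by ring

/-- Proposition 3.7 (d). -/
theorem statement_18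
    {X : Type*} [NormedAddCommGroup X] [NormedSpace ℝ X] [CompleteSpace X]
    (z : ℕ → X) (hzsn : IsSeminormalized z) (hzb : IsBasicSeq z)
    -- (z_i) is Schreier unconditional with some constant Cs
    (Cs : ℝ) (hCs : 0 < Cs)
    (hSch : ∀ (N : ℕ) (a : ℕ → ℝ), (∀ i, N ≤ i → a i = 0) →
      ∀ F : Finset ℕ, (∀ m ∈ F, F.card ≤ m) →
        ‖∑ i ∈ F, a i • z i‖ ≤ Cs * ‖∑ i ∈ Finset.range N, a i • z i‖)
    (hP1 : PropertyP1 z) :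
    ∃ φ : ℕ → ℕ, StrictMono φ ∧ PropertyP2 (fun i => z (φ i)) := by
  refine ⟨fun i => 2*i+1, fun i j hij => by dsimp only; omega, ?_⟩
  intro ρ hρ
  obtain ⟨N₀, hN₀⟩ := hP1 (Cs/ρ + 1)
  set K := 2*(N₀+1) with hK
  refine ⟨2*K, ?_⟩
  intro N a hnorm
  by_contra hcard
  push_neg at hcard
  set B := (Finset.range N).filter (fun i => ρ ≤ |a i|) with hBdef
  -- the part of B above K is large
  have hsmall : (B.filter (fun i => i < K)).card ≤ K := by
    have : B.filter (fun i => i < K) ⊆ Finset.range K := by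
      intro x hx
      simp only [Finset.mem_filter] at hx
      exact Finset.mem_range.2 hx.2
    simpa using Finset.card_le_card this
  have hbigc : K ≤ (B.filter (fun i => K ≤ i)).card := by
    have hpm := Finset.card_filter_add_card_filter_not
      (s := B) (p := fun i => i < K)
    simp only [not_lt] at hpm
    omega
  obtain ⟨B', hB'sub, hB'card⟩ := Finset.exists_subset_card_eq hbigc
  -- coefficients on the original sequence
  set c : ℕ → ℝ := fun j => if j % 2 = 1 ∧ j / 2 < N then a (j/2) else 0 with hcdef
  have hc0 : ∀ j, 2*N+1 ≤ j → c j = 0 := by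
    intro j hj
    simp only [hcdef]
    rw [if_neg]
    rintro ⟨h1, h2⟩
    omega
  have hcphi : ∀ i, i < N → c (2*i+1) = a i := by
    intro i hi
    simp only [hcdef]
    rw [if_pos]
    · congr 1; omega
    · constructor <;> omega
  have hinj : ∀ x ∈ Finset.range N, ∀ y ∈ Finset.range N,
      (fun i => 2*i+1) x = (fun i => 2*i+1) y → x = y := by
    intro x _ y _ h
    dsimp only at h
    omega
  have hcsum : ∑ j ∈ Finset.range (2*N+1), c j • z j
      = ∑ i ∈ Finset.range N, a i • z (2*i+1) := by
    have h2 : ∑ j ∈ (Finset.range N).image (fun i => 2*i+1), c j • z j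
        = ∑ i ∈ Finset.range N, c (2*i+1) • z (2*i+1) := Finset.sum_image hinj
    have h3 : ∑ j ∈ Finset.range (2*N+1), c j • z j
        = ∑ j ∈ (Finset.range N).image (fun i => 2*i+1), c j • z j := by
      refine (Finset.sum_subset ?_ ?_).symm
      · intro j hj
        simp only [Finset.mem_image, Finset.mem_range] at hj ⊢
        obtain ⟨i, hi, rfl⟩ := hj
        omega
      · intro j _ hj2
        have : c j = 0 := by
          by_cases hcond : j % 2 = 1 ∧ j / 2 < N
          · exact absurd (by
              simp only [Finset.mem_image, Finset.mem_range]
              exact ⟨j/2, hcond.2, by omega⟩) hj2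
          · simp only [hcdef]
            rw [if_neg hcond]
        rw [this, zero_smul]
    rw [h3, h2]
    refine Finset.sum_congr rfl (fun i hi => ?_)
    rw [hcphi i (Finset.mem_range.1 hi)]
  have hcnorm : ‖∑ j ∈ Finset.range (2*N+1), c j • z j‖ = 1 := by
    rw [hcsum]
    exact hnorm
  set F := B'.image (fun i => 2*i+1) with hFdef
  have hFcard : F.card = K := by
    rw [hFdef, Finset.card_image_of_injOn (fun x _ y _ h => by omega),
      hB'card]
  have hFmem : ∀ j ∈ F, ∃ i, i ∈ B' ∧ j = 2*i+1 := by
    intro j hj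
    simp only [hFdef, Finset.mem_image] at hj
    obtain ⟨i, hi, rfl⟩ := hj
    exact ⟨i, hi, rfl⟩
  have hSchF : ∀ T ⊆ F, ∀ m ∈ T, T.card ≤ m := by
    intro T hT m hm
    obtain ⟨i, hiB', rfl⟩ := hFmem m (hT hm)
    have hKi : K ≤ i := (Finset.mem_filter.1 (hB'sub hiB')).2
    have hTc : T.card ≤ K := hFcard ▸ Finset.card_le_card hT
    omega
  have hCsT : ∀ T ⊆ F, ‖∑ j ∈ T, c j • z j‖ ≤ Cs := by
    intro T hT
    have := hSch (2*N+1) c hc0 T (hSchF T hT)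
    rwa [hcnorm, mul_one] at this
  have hρc : ∀ j ∈ F, ρ ≤ |c j| := by
    intro j hj
    obtain ⟨i, hiB', rfl⟩ := hFmem j hj
    have hiB : i ∈ B := Finset.mem_of_mem_filter i (hB'sub hiB')
    have := Finset.mem_filter.1 hiB
    rw [hcphi i (Finset.mem_range.1 this.1)]
    exact this.2
  set Fp := F.filter (fun j => 0 < c j) with hFpdef
  set Fm := F.filter (fun j => c j < 0) with hFmdef
  have hFunion : F ⊆ Fp ∪ Fm := by
    intro j hj
    have hne : c j ≠ 0 := by
      intro h
      have := hρc j hj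
      rw [h, abs_zero] at this
      linarith
    rcases hne.lt_or_gt with h | h
    · exact Finset.mem_union_right _ (Finset.mem_filter.2 ⟨hj, h⟩)
    · exact Finset.mem_union_left _ (Finset.mem_filter.2 ⟨hj, h⟩)
  have hcards : K ≤ Fp.card + Fm.card :=
    le_trans (hFcard ▸ Finset.card_le_card hFunion) (Finset.card_union_le _ _)
  have hPbound : ‖∑ j ∈ Fp, z j‖ ≤ Cs / ρ := by
    have hmul := multiplier_bound' (fun j => c j • z j) Cs Fp
      (fun T hT => hCsT T (hT.trans (Finset.filter_subset _ _))) (fun j => ρ / c j) ?_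
    · have heq : ∑ j ∈ Fp, (ρ / c j) • (c j • z j) = ρ • ∑ j ∈ Fp, z j := by
        rw [Finset.smul_sum]
        refine Finset.sum_congr rfl (fun j hj => ?_)
        have hcj : 0 < c j := (Finset.mem_filter.1 hj).2
        rw [smul_smul, div_mul_cancel₀ ρ (ne_of_gt hcj)]
      rw [heq, norm_smul, Real.norm_of_nonneg hρ.le] at hmul
      rw [le_div_iff₀ hρ]
      linarith
    · intro j hj
      have hcj : 0 < c j := (Finset.mem_filter.1 hj).2
      have hρj : ρ ≤ c j := by
        have := hρc j (Finset.mem_of_mem_filter j hj)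
        rwa [abs_of_pos hcj] at this
      exact ⟨div_nonneg hρ.le hcj.le, (div_le_one hcj).2 hρj⟩
  have hMbound : ‖∑ j ∈ Fm, z j‖ ≤ Cs / ρ := by
    have hmul := multiplier_bound' (fun j => c j • z j) Cs Fm
      (fun T hT => hCsT T (hT.trans (Finset.filter_subset _ _))) (fun j => ρ / (-c j)) ?_
    · have heq : ∑ j ∈ Fm, (ρ / (-c j)) • (c j • z j) = (-ρ) • ∑ j ∈ Fm, z j := by
        rw [Finset.smul_sum]
        refine Finset.sum_congr rfl (fun j hj => ?_)
        have hcj : c j < 0 := (Finset.mem_filter.1 hj).2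
        rw [smul_smul]
        congr 1
        field_simp
        rw [div_self (ne_of_lt hcj)]
      rw [heq, norm_smul, norm_neg, Real.norm_of_nonneg hρ.le] at hmul
      rw [le_div_iff₀ hρ]
      linarith
    · intro j hj
      have hcj : c j < 0 := (Finset.mem_filter.1 hj).2
      have hρj : ρ ≤ -c j := by
        have := hρc j (Finset.mem_of_mem_filter j hj)
        rwa [abs_of_neg hcj] at this
      exact ⟨div_nonneg hρ.le (by linarith), (div_le_one (by linarith)).2 hρj⟩
  have hone : N₀ ≤ Fp.card ∨ N₀ ≤ Fm.card := by omega
  rcases hone with h | h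
  · have := hN₀ Fp h
    linarith
  · have := hN₀ Fm h
    linarith



end
end
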